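/- Let M_1, ..., M_k be matroids on ground sets E_1, ..., E_k with rank functions r_1, ..., r_k. Then their union M_1 ∨ ⋯ ∨ M_k, whose independent sets are all unions I_1 ∪ ⋯ ∪ I_k with I_j independent in M_j, is a matroid on E_1 ∪ ⋯ ∪ E_k with rank function r(U) = min over T ⊆ U of (|U \ T| + Σ_{i∈[k]} r_i(T ∩ E_i)). -/

import Mathlib

set_option linter.unusedSectionVars false
set_option maxHeartbeats 1000000

/-- A (directed) path given as a nonempty list of pairwise-distinct vertices
with consecutive pairs being edges of the digraph `G`. -/
def IsPathList {V : Type*} (G : V → V → Prop) (p : List V) : Prop :=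
  p ≠ [] ∧ p.Nodup ∧ p.Chain' G

/-- The first vertex of the list `p` belongs to `A`. -/
def FirstIn {V : Type*} (p : List V) (A : Set V) : Prop := ∃ a ∈ A, p.head? = some a

/-- The last vertex of the list `p` belongs to `A`. -/
def LastIn {V : Type*} (p : List V) (A : Set V) : Prop := ∃ a ∈ A, p.getLast? = some a

/-- `X` is an `(A,B)`-separator in `G`: every path of `G` starting in `A` and
ending in `B` meets `X`. -/
def IsSeparator {V : Type*} (G : V → V → Prop) (A B X : Set V) : Prop :=
  ∀ p : List V, IsPathList G p → FirstIn p A → LastIn p B → ∃ v ∈ p, v ∈ X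

/-- Two lists of vertices share no vertex. -/
def ListsDisjoint {V : Type*} (p q : List V) : Prop := ∀ v, v ∈ p → v ∉ q

/-- The rank of `U` for an independence predicate: the maximum size of an
independent subset of `U`. -/
noncomputable def rankOf {α : Type*} (Ind : Set α → Prop) (U : Set α) : ℕ :=
  sSup {n | ∃ I ⊆ U, Ind I ∧ I.ncard = n}

namespace MatroidUnionAux

open Set

variable {α : Type*} [Fintype α] {M : Matroid α} {I J X Y : Set α}

lemma rank_bdd (M : Matroid α) (X : Set α) :
    BddAbove {n | ∃ I ⊆ X, M.Indep I ∧ I.ncard = n} :=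
  ⟨(Set.univ : Set α).ncard, by
    rintro n ⟨J, _, _, rfl⟩
    exact Set.ncard_le_ncard (subset_univ J) (Set.toFinite _)⟩

lemma rank_nonempty (M : Matroid α) (X : Set α) :
    {n | ∃ I ⊆ X, M.Indep I ∧ I.ncard = n}.Nonempty :=
  ⟨0, ∅, empty_subset _, M.empty_indep, by simp⟩

lemma le_rankOf (hJ : M.Indep J) (hJX : J ⊆ X) : J.ncard ≤ rankOf M.Indep X :=
  le_csSup (rank_bdd M X) ⟨J, hJX, hJ, rfl⟩

lemma rankOf_basis' (hI : M.IsBasis' I X) : rankOf M.Indep X = I.ncard := by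
  refine le_antisymm (csSup_le (rank_nonempty M X) ?_) (le_rankOf hI.indep hI.subset)
  rintro n ⟨J, hJX, hJ, rfl⟩
  obtain ⟨J', hJ', hJJ'⟩ := hJ.subset_isBasis'_of_subset hJX
  have h1 : J'.ncard = I.ncard := by
    have := hJ'.encard_eq_encard hI
    simp only [Set.ncard_def, this]
  exact (Set.ncard_le_ncard hJJ' (Set.toFinite _)).trans h1.le

lemma rankOf_le_ncard (M : Matroid α) (X : Set α) : rankOf M.Indep X ≤ X.ncard := by
  refine csSup_le (rank_nonempty M X) ?_
  rintro n ⟨J, hJX, _, rfl⟩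
  exact Set.ncard_le_ncard hJX (Set.toFinite _)

lemma rankOf_mono (M : Matroid α) (hXY : X ⊆ Y) : rankOf M.Indep X ≤ rankOf M.Indep Y := by
  refine csSup_le (rank_nonempty M X) ?_
  rintro n ⟨J, hJX, hJ, rfl⟩
  exact le_rankOf hJ (hJX.trans hXY)

lemma rankOf_empty (M : Matroid α) : rankOf M.Indep (∅ : Set α) = 0 :=
  Nat.le_zero.mp <| (rankOf_le_ncard M ∅).trans (by simp)

lemma indep_of_rankOf_eq (h : rankOf M.Indep X = X.ncard) : M.Indep X := by
  obtain ⟨I, hI⟩ := M.exists_isBasis' X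
  have h1 : I = X :=
    Set.eq_of_subset_of_ncard_le hI.subset (by rw [← h, rankOf_basis' hI]) (Set.toFinite _)
  exact h1 ▸ hI.indep

lemma rankOf_submodular (M : Matroid α) (X Y : Set α) :
    rankOf M.Indep (X ∪ Y) + rankOf M.Indep (X ∩ Y)
      ≤ rankOf M.Indep X + rankOf M.Indep Y := by
  obtain ⟨I, hI⟩ := M.exists_isBasis' (X ∩ Y)
  obtain ⟨J, hJ, hIJ⟩ := hI.indep.subset_isBasis'_of_subset
    (hI.subset.trans (inter_subset_left.trans subset_union_left))
  have hJXY : J ⊆ X ∪ Y := hJ.subset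
  have hIeq : I = J ∩ (X ∩ Y) :=
    hI.eq_of_subset_indep (hJ.indep.subset inter_subset_left)
      (subset_inter hIJ hI.subset) inter_subset_right
  have key : (J ∩ X).ncard + (J ∩ Y).ncard = J.ncard + I.ncard := by
    have h2 : (J ∩ X) ∪ (J ∩ Y) = J := by
      rw [← inter_union_distrib_left, inter_eq_self_of_subset_left hJXY]
    have h3 : (J ∩ X) ∩ (J ∩ Y) = J ∩ (X ∩ Y) := by
      ext x; simp; tauto
    rw [← Set.ncard_union_add_ncard_inter (J ∩ X) (J ∩ Y) (Set.toFinite _) (Set.toFinite _),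
      h2, h3, ← hIeq]
  rw [rankOf_basis' hJ, rankOf_basis' hI, ← key]
  exact add_le_add (le_rankOf (hJ.indep.subset inter_subset_left) inter_subset_right)
    (le_rankOf (hJ.indep.subset inter_subset_left) inter_subset_right)


lemma ncard_iUnion_le {ι : Type*} [Fintype ι] (s : ι → Set α) :
    (⋃ i, s i).ncard ≤ ∑ i, (s i).ncard := by
  classical
  have main : ∀ u : Finset ι, (⋃ i ∈ u, s i).ncard ≤ ∑ i ∈ u, (s i).ncard := by
    intro u
    induction u using Finset.induction_on with
    | empty => simp
    | @insert y u hy ih =>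
      rw [Finset.set_biUnion_insert, Finset.sum_insert hy]
      exact (Set.ncard_union_le _ _).trans (add_le_add le_rfl ih)
  have := main Finset.univ
  simpa using this


section Union

variable {k : ℕ} (M : Fin k → Matroid α)

/-- The submodular function `T ↦ Σ_i r_i (T ∩ E_i)`. -/
noncomputable def fS (T : Set α) : ℕ := ∑ i, rankOf (M i).Indep (T ∩ (M i).E)

/-- Independence in the union matroid, via the submodular function. -/
def NInd (I : Set α) : Prop := ∀ T ⊆ I, T.ncard ≤ fS M T

variable {M}

lemma fS_empty : fS M (∅ : Set α) = 0 :=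
  Finset.sum_eq_zero fun i _ => by rw [Set.empty_inter, rankOf_empty]

lemma fS_mono (hXY : X ⊆ Y) : fS M X ≤ fS M Y :=
  Finset.sum_le_sum fun i _ => rankOf_mono (M i) (inter_subset_inter_left _ hXY)

lemma fS_submodular (X Y : Set α) : fS M (X ∪ Y) + fS M (X ∩ Y) ≤ fS M X + fS M Y := by
  rw [fS, fS, fS, fS, ← Finset.sum_add_distrib, ← Finset.sum_add_distrib]
  refine Finset.sum_le_sum fun i _ => ?_
  have h1 : (X ∪ Y) ∩ (M i).E = (X ∩ (M i).E) ∪ (Y ∩ (M i).E) := union_inter_distrib_right X Y _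
  have h2 : (X ∩ Y) ∩ (M i).E = (X ∩ (M i).E) ∩ (Y ∩ (M i).E) := by
    ext x; simp; tauto
  rw [h1, h2]
  exact rankOf_submodular (M i) _ _

lemma NInd_empty : NInd M ∅ := by
  intro T hT
  rw [subset_empty_iff.mp hT]
  simp

lemma NInd_subset {I J : Set α} (hJ : NInd M J) (hIJ : I ⊆ J) : NInd M I :=
  fun T hT => hJ T (hT.trans hIJ)

lemma NInd_subset_ground {I : Set α} (hI : NInd M I) : I ⊆ ⋃ i, (M i).E := by
  intro x hx
  by_contra hxE
  have h1 := hI {x} (singleton_subset_iff.mpr hx)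
  rw [ncard_singleton] at h1
  have h2 : fS M {x} = 0 := by
    refine Finset.sum_eq_zero fun i _ => ?_
    have : {x} ∩ (M i).E = ∅ := by
      rw [singleton_inter_eq_empty]
      exact fun h => hxE (mem_iUnion.mpr ⟨i, h⟩)
    rw [this, rankOf_empty]
  omega

/-- Union of two tight subsets of an `NInd` set is tight. -/
lemma tight_union {I A B : Set α} (hI : NInd M I) (hA : A ⊆ I) (hB : B ⊆ I)
    (h1 : fS M A = A.ncard) (h2 : fS M B = B.ncard) : fS M (A ∪ B) = (A ∪ B).ncard := by
  have hsub := fS_submodular (M := M) A B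
  have hcap : (A ∩ B).ncard ≤ fS M (A ∩ B) := hI _ ((inter_subset_left).trans hA)
  have hcup : (A ∪ B).ncard ≤ fS M (A ∪ B) := hI _ (union_subset hA hB)
  have hcard : (A ∪ B).ncard + (A ∩ B).ncard = A.ncard + B.ncard :=
    Set.ncard_union_add_ncard_inter A B (Set.toFinite _) (Set.toFinite _)
  omega

/-- Key lemma: if no element of `W` can be added to the `NInd` set `I`, then there is a
tight `A ⊆ I` with `fS (A ∪ W) = |A|`. -/
lemma exists_tight {I : Set α} (hI : NInd M I) (W : Set α)
    (hW : ∀ x ∈ W, x ∉ I ∧ ¬ NInd M (insert x I)) :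
    ∃ A ⊆ I, fS M (A ∪ W) = A.ncard := by
  classical
  -- pick violating sets
  have hT : ∀ x ∈ W, ∃ T ⊆ insert x I, fS M T < T.ncard := by
    intro x hx
    have := (hW x hx).2
    rw [NInd] at this
    push_neg at this
    obtain ⟨T, hT1, hT2⟩ := this
    exact ⟨T, hT1, hT2⟩
  choose! T hT1 hT2 using hT
  have hxT : ∀ x ∈ W, x ∈ T x := by
    intro x hx
    by_contra hxx
    have hTI : T x ⊆ I := fun y hy => by
      rcases hT1 x hx hy with rfl | h
      · exact absurd hy hxx
      · exact h
    exact absurd (hI _ hTI) (not_le.mpr (hT2 x hx))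
  -- A x := T x \ {x} is tight and absorbs x
  set A : α → Set α := fun x => T x \ {x} with hA
  have hAI : ∀ x ∈ W, A x ⊆ I := by
    intro x hx y hy
    rcases hT1 x hx hy.1 with rfl | h
    · exact absurd rfl hy.2
    · exact h
  have hcardT : ∀ x ∈ W, (T x).ncard = (A x).ncard + 1 := by
    intro x hx
    rw [hA]
    exact (Set.ncard_diff_singleton_add_one (hxT x hx) (Set.toFinite _)).symm
  have htightA : ∀ x ∈ W, fS M (A x) = (A x).ncard ∧ fS M (T x) = (A x).ncard := by
    intro x hx
    have h1 : (A x).ncard ≤ fS M (A x) := hI _ (hAI x hx)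
    have h2 : fS M (A x) ≤ fS M (T x) := fS_mono diff_subset
    have h3 : fS M (T x) < (T x).ncard := hT2 x hx
    have h4 := hcardT x hx
    omega
  -- the union AU of all A x is tight
  set AU : Set α := ⋃ x ∈ W, A x with hAU
  have hAUI : AU ⊆ I := iUnion₂_subset fun x hx => hAI x hx
  have hAxAU : ∀ x ∈ W, A x ⊆ AU := fun x hx => subset_biUnion_of_mem hx
  have htightAU : fS M AU = AU.ncard := by
    -- finite induction over W
    have main : ∀ S : Finset α, ↑S ⊆ W → fS M (⋃ x ∈ (S : Set α), A x) =
        (⋃ x ∈ (S : Set α), A x).ncard := by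
      intro S
      induction S using Finset.induction_on with
      | empty => intro _; simp [fS_empty]
      | @insert y S hyS ih =>
        intro hSW
        have hyW : y ∈ W := hSW (Finset.mem_insert_self y S)
        have hSW' : ↑S ⊆ W := fun z hz => hSW (Finset.mem_insert_of_mem hz)
        have hrw : (⋃ x ∈ ((insert y S : Finset α) : Set α), A x)
            = A y ∪ ⋃ x ∈ (S : Set α), A x := by
          simp [Set.biUnion_insert]
        rw [hrw]
        exact tight_union hI (hAI y hyW) (iUnion₂_subset fun x hx => hAI x (hSW' hx))
          (htightA y hyW).1 (ih hSW')
    have hWfin : W = ↑(W.toFinset) := by simp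
    have := main W.toFinset (by simp)
    rw [hAU, hWfin]
    convert this using 2 <;> simp
  -- absorb elements of W one at a time
  have habsorb1 : ∀ x ∈ W, fS M (AU ∪ {x}) = fS M AU := by
    intro x hx
    refine le_antisymm ?_ (fS_mono subset_union_left)
    have hsub := fS_submodular (M := M) AU (T x)
    have h1 : AU ∪ T x = AU ∪ {x} := by
      have : T x = A x ∪ {x} := by
        rw [hA]
        simp only
        rw [Set.diff_union_self,
          Set.union_eq_self_of_subset_right (Set.singleton_subset_iff.mpr (hxT x hx))]
      rw [this, ← union_assoc, union_eq_self_of_subset_right (hAxAU x hx)]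
    have h2 : AU ∩ T x = A x := by
      apply subset_antisymm
      · intro y hy
        refine ⟨hy.2, ?_⟩
        simp only [mem_singleton_iff]
        intro rfl'
        subst rfl'
        exact (hW y hx).1 (hAUI hy.1)
      · exact subset_inter (hAxAU x hx) diff_subset
    rw [h1, h2] at hsub
    have h3 := (htightA x hx).1
    have h4 := (htightA x hx).2
    omega
  have habsorb : ∀ S : Finset α, ↑S ⊆ W → fS M (AU ∪ ↑S) = fS M AU := by
    intro S
    induction S using Finset.induction_on with
    | empty => intro _; simp
    | @insert y S hyS ih =>
      intro hSW
      have hyW : y ∈ W := hSW (Finset.mem_insert_self y S)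
      have hSW' : ↑S ⊆ W := fun z hz => hSW (Finset.mem_insert_of_mem hz)
      refine le_antisymm ?_ (fS_mono subset_union_left)
      have hsub := fS_submodular (M := M) (AU ∪ ↑S) (AU ∪ {y})
      have h1 : (AU ∪ ↑S) ∪ (AU ∪ {y}) = AU ∪ ↑(insert y S) := by
        simp only [Finset.coe_insert, Set.insert_eq]
        rw [union_comm ({y} : Set α) (↑S : Set α)]
        ext z; simp; tauto
      have h2 : AU ⊆ (AU ∪ ↑S) ∩ (AU ∪ {y}) :=
        subset_inter subset_union_left subset_union_left
      have h3 := fS_mono (M := M) h2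
      rw [h1] at hsub
      have h4 := ih hSW'
      have h5 := habsorb1 y hyW
      omega
  refine ⟨AU, hAUI, ?_⟩
  have hWfin : (W.toFinset : Set α) = W := by simp
  have := habsorb W.toFinset (by simp)
  rw [hWfin] at this
  rw [this, htightAU]


lemma NInd_aug {I J : Set α} (hI : NInd M I) (hJ : NInd M J) (hlt : I.ncard < J.ncard) :
    ∃ e ∈ J, e ∉ I ∧ NInd M (insert e I) := by
  by_contra hcon
  push_neg at hcon
  have hW : ∀ x ∈ J \ I, x ∉ I ∧ ¬ NInd M (insert x I) :=
    fun x hx => ⟨hx.2, hcon x hx.1 hx.2⟩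
  obtain ⟨A, hAI, hkey⟩ := exists_tight hI (J \ I) hW
  have hTJ : (A ∩ J) ∪ (J \ I) ⊆ J := union_subset inter_subset_right diff_subset
  have h1 : ((A ∩ J) ∪ (J \ I)).ncard ≤ fS M ((A ∩ J) ∪ (J \ I)) := hJ _ hTJ
  have h2 : fS M ((A ∩ J) ∪ (J \ I)) ≤ fS M (A ∪ (J \ I)) :=
    fS_mono (union_subset_union_left _ inter_subset_left)
  have hdisj : Disjoint (A ∩ J) (J \ I) :=
    Set.disjoint_left.mpr fun x hx1 hx2 => hx2.2 (hAI hx1.1)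
  have h3 : ((A ∩ J) ∪ (J \ I)).ncard = (A ∩ J).ncard + (J \ I).ncard :=
    Set.ncard_union_eq hdisj (Set.toFinite _) (Set.toFinite _)
  have h4 : (A ∩ J).ncard + (A \ J).ncard = A.ncard :=
    Set.ncard_inter_add_ncard_diff_eq_ncard A J (Set.toFinite _)
  have h5 : (A \ J).ncard ≤ (I \ J).ncard :=
    Set.ncard_le_ncard (diff_subset_diff_left hAI) (Set.toFinite _)
  have h6 : (I ∩ J).ncard + (I \ J).ncard = I.ncard :=
    Set.ncard_inter_add_ncard_diff_eq_ncard I J (Set.toFinite _)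
  have h7 : (J ∩ I).ncard + (J \ I).ncard = J.ncard :=
    Set.ncard_inter_add_ncard_diff_eq_ncard J I (Set.toFinite _)
  have h8 : (I ∩ J).ncard = (J ∩ I).ncard := by rw [inter_comm]
  omega

variable (M) in
noncomputable def UnionMatroid : Matroid α :=
  (IndepMatroid.ofFinite (Set.toFinite (⋃ i, (M i).E)) (NInd M) NInd_empty
    (fun _ _ hJ hIJ => NInd_subset hJ hIJ)
    (fun _ _ hI hJ hlt => NInd_aug hI hJ hlt)
    (fun _ hI => NInd_subset_ground hI)).matroid

lemma unionMatroid_indep : (UnionMatroid M).Indep = NInd M := rfl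
lemma unionMatroid_E : (UnionMatroid M).E = ⋃ i, (M i).E := rfl

/-- Rado-style theorem: a defect-free system of matroid constraints admits a choice. -/
lemma rado : ∀ (n : ℕ) (S : α → Finset (Fin k)) (I : Set α),
    (∑ x ∈ I.toFinite.toFinset, (S x).card) = n →
    (∀ x ∈ I, ∀ i ∈ S x, x ∈ (M i).E) →
    (∀ T ⊆ I, T.ncard ≤ ∑ i, rankOf (M i).Indep {x ∈ T | i ∈ S x}) →
    ∃ g : Fin k → Set α, (∀ i, (M i).Indep (g i)) ∧ I ⊆ (⋃ i, g i) ∧ (∀ i, g i ⊆ I) := by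
  intro n
  induction n using Nat.strong_induction_on with
  | _ n IH =>
  intro S I hn hSE hcond
  classical
  by_cases h2 : ∃ x ∈ I, 2 ≤ (S x).card
  · obtain ⟨x, hxI, hx2⟩ := h2
    obtain ⟨a, ha, b, hb, hab⟩ := Finset.one_lt_card.mp hx2
    -- the modified systems
    set Sa : α → Finset (Fin k) := fun y => if y = x then (S x).erase a else S y with hSa
    set Sb : α → Finset (Fin k) := fun y => if y = x then (S x).erase b else S y with hSb
    have hSa_sub : ∀ y, Sa y ⊆ S y := by
      intro y i hi
      by_cases hyx : y = x
      · subst hyx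
        exact Finset.erase_subset _ _ (by simpa [hSa] using hi)
      · simpa [hSa, if_neg hyx] using hi
    have hSb_sub : ∀ y, Sb y ⊆ S y := by
      intro y i hi
      by_cases hyx : y = x
      · subst hyx
        exact Finset.erase_subset _ _ (by simpa [hSb] using hi)
      · simpa [hSb, if_neg hyx] using hi
    have hmeas : ∀ (c : Fin k), c ∈ S x →
        (∑ y ∈ I.toFinite.toFinset, ((fun y => if y = x then (S x).erase c else S y) y).card) < n := by
      intro c hc
      rw [← hn]
      refine Finset.sum_lt_sum (fun y _ => ?_) ⟨x, (Set.Finite.mem_toFinset _).mpr hxI, ?_⟩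
      · by_cases hyx : y = x
        · subst hyx; simp only [if_pos rfl]
          exact Finset.card_le_card (Finset.erase_subset _ _)
        · simp [if_neg hyx]
      · simp only [if_pos rfl]
        exact Finset.card_erase_lt_of_mem hc
    have hSE' : ∀ (Sc : α → Finset (Fin k)), (∀ y, Sc y ⊆ S y) →
        ∀ y ∈ I, ∀ i ∈ Sc y, y ∈ (M i).E :=
      fun Sc hSc y hy i hi => hSE y hy i (hSc y hi)
    by_cases hca : ∀ T ⊆ I, T.ncard ≤ ∑ i, rankOf (M i).Indep {y ∈ T | i ∈ Sa y}
    · exact IH _ (hmeas a ha) Sa I rfl (hSE' Sa hSa_sub) hca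
    by_cases hcb : ∀ T ⊆ I, T.ncard ≤ ∑ i, rankOf (M i).Indep {y ∈ T | i ∈ Sb y}
    · exact IH _ (hmeas b hb) Sb I rfl (hSE' Sb hSb_sub) hcb
    exfalso
    push_neg at hca hcb
    obtain ⟨Ta, hTaI, hTa⟩ := hca
    obtain ⟨Tb, hTbI, hTb⟩ := hcb
    -- x must lie in both Ta and Tb
    have hmem : ∀ (Sc : α → Finset (Fin k)) (T : Set α), (∀ y, Sc y ⊆ S y) →
        (∀ y, y ≠ x → Sc y = S y) → x ∉ T →
        ∀ i : Fin k, {y ∈ T | i ∈ Sc y} = {y ∈ T | i ∈ S y} := by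
      intro Sc T hsub heq hx i
      ext y
      simp only [Set.mem_setOf_eq]
      constructor
      · rintro ⟨hy, hiy⟩; exact ⟨hy, hsub y hiy⟩
      · rintro ⟨hy, hiy⟩
        have hyx : y ≠ x := fun h => hx (h ▸ hy)
        rw [heq y hyx] at *
        exact ⟨hy, hiy⟩
    have hSaeq : ∀ y, y ≠ x → Sa y = S y := fun y hyx => by simp [hSa, if_neg hyx]
    have hSbeq : ∀ y, y ≠ x → Sb y = S y := fun y hyx => by simp [hSb, if_neg hyx]
    have hxTa : x ∈ Ta := by
      by_contra hx
      have heq := hmem Sa Ta hSa_sub hSaeq hx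
      have := hcond Ta hTaI
      simp_rw [heq] at hTa
      omega
    have hxTb : x ∈ Tb := by
      by_contra hx
      have heq := hmem Sb Tb hSb_sub hSbeq hx
      have := hcond Tb hTbI
      simp_rw [heq] at hTb
      omega
    -- submodular contradiction
    have hsum : ∀ i : Fin k,
        rankOf (M i).Indep {y ∈ Ta ∪ Tb | i ∈ S y}
          + rankOf (M i).Indep {y ∈ (Ta ∩ Tb) \ {x} | i ∈ S y}
        ≤ rankOf (M i).Indep {y ∈ Ta | i ∈ Sa y}
          + rankOf (M i).Indep {y ∈ Tb | i ∈ Sb y} := by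
      intro i
      have hU : {y ∈ Ta | i ∈ Sa y} ∪ {y ∈ Tb | i ∈ Sb y} = {y ∈ Ta ∪ Tb | i ∈ S y} := by
        ext y
        by_cases hyx : y = x
        · subst hyx
          have hSax : Sa y = (S y).erase a := by simp [hSa]
          have hSbx : Sb y = (S y).erase b := by simp [hSb]
          simp only [Set.mem_union, Set.mem_setOf_eq, hSax, hSbx, Finset.mem_erase]
          constructor
          · rintro (⟨h1, _, h3⟩ | ⟨h1, _, h3⟩)
            · exact ⟨Or.inl h1, h3⟩
            · exact ⟨Or.inr h1, h3⟩
          · rintro ⟨_, hiS⟩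
            rcases eq_or_ne i a with rfl | hia
            · exact Or.inr ⟨hxTb, hab, hiS⟩
            · exact Or.inl ⟨hxTa, hia, hiS⟩
        · simp only [Set.mem_union, Set.mem_setOf_eq, hSaeq y hyx, hSbeq y hyx]
          tauto
      have hI2 : {y ∈ (Ta ∩ Tb) \ {x} | i ∈ S y}
          ⊆ {y ∈ Ta | i ∈ Sa y} ∩ {y ∈ Tb | i ∈ Sb y} := by
        rintro y ⟨⟨⟨h1, h2⟩, h3⟩, h4⟩
        have hyx : y ≠ x := h3
        rw [Set.mem_inter_iff]
        exact ⟨⟨h1, (hSaeq y hyx).symm ▸ h4⟩, ⟨h2, (hSbeq y hyx).symm ▸ h4⟩⟩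
      calc rankOf (M i).Indep {y ∈ Ta ∪ Tb | i ∈ S y}
            + rankOf (M i).Indep {y ∈ (Ta ∩ Tb) \ {x} | i ∈ S y}
          ≤ rankOf (M i).Indep ({y ∈ Ta | i ∈ Sa y} ∪ {y ∈ Tb | i ∈ Sb y})
            + rankOf (M i).Indep ({y ∈ Ta | i ∈ Sa y} ∩ {y ∈ Tb | i ∈ Sb y}) := by
            rw [hU]
            exact add_le_add le_rfl (rankOf_mono (M i) hI2)
        _ ≤ _ := rankOf_submodular (M i) _ _
    have hbig : ∑ i, rankOf (M i).Indep {y ∈ Ta ∪ Tb | i ∈ S y}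
        + ∑ i, rankOf (M i).Indep {y ∈ (Ta ∩ Tb) \ {x} | i ∈ S y}
        ≤ ∑ i, rankOf (M i).Indep {y ∈ Ta | i ∈ Sa y}
          + ∑ i, rankOf (M i).Indep {y ∈ Tb | i ∈ Sb y} := by
      rw [← Finset.sum_add_distrib, ← Finset.sum_add_distrib]
      exact Finset.sum_le_sum fun i _ => hsum i
    have hc1 := hcond (Ta ∪ Tb) (union_subset hTaI hTbI)
    have hc2 := hcond ((Ta ∩ Tb) \ {x})
      ((diff_subset.trans inter_subset_left).trans hTaI)
    have hcard1 : (Ta ∪ Tb).ncard + (Ta ∩ Tb).ncard = Ta.ncard + Tb.ncard :=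
      Set.ncard_union_add_ncard_inter Ta Tb (Set.toFinite _) (Set.toFinite _)
    have hxab : x ∈ Ta ∩ Tb := ⟨hxTa, hxTb⟩
    have hcard2 : ((Ta ∩ Tb) \ {x}).ncard + 1 = (Ta ∩ Tb).ncard :=
      Set.ncard_diff_singleton_add_one hxab (Set.toFinite _)
    omega
  · -- every `S x` is a singleton
    push_neg at h2
    have hone : ∀ x ∈ I, (S x).card = 1 := by
      intro x hx
      have hlt := h2 x hx
      rcases (by omega : (S x).card = 0 ∨ (S x).card = 1) with h0 | h1
      · exfalso
        have hSx : S x = ∅ := Finset.card_eq_zero.mp h0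
        have h1 := hcond {x} (singleton_subset_iff.mpr hx)
        have h2' : ∀ i : Fin k, {y ∈ ({x} : Set α) | i ∈ S y} = ∅ := by
          intro i
          ext y
          simp only [Set.mem_setOf_eq, Set.mem_singleton_iff, Set.mem_empty_iff_false,
            iff_false, not_and]
          rintro rfl
          simp [hSx]
        have hz : ∑ i, rankOf (M i).Indep {y ∈ ({x} : Set α) | i ∈ S y} = 0 :=
          Finset.sum_eq_zero fun i _ => by rw [h2' i, rankOf_empty]
        rw [hz, ncard_singleton] at h1
        omega
      · exact h1
    refine ⟨fun i => {x ∈ I | i ∈ S x}, fun i => ?_, fun x hx => ?_, fun i => sep_subset _ _⟩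
    · set g := {x ∈ I | i ∈ S x} with hg
      have hsub : g ⊆ I := sep_subset _ _
      have hcnd := hcond g hsub
      have heq : ∀ j : Fin k, j ≠ i → {y ∈ g | j ∈ S y} = ∅ := by
        intro j hj
        ext y
        simp only [Set.mem_setOf_eq, Set.mem_empty_iff_false, iff_false, not_and]
        rintro ⟨hyI, hyi⟩ hyj
        exact hj (Finset.card_le_one.mp (hone y hyI).le j hyj i hyi)
      have heqi : {y ∈ g | i ∈ S y} = g := by
        ext y
        simp only [Set.mem_setOf_eq, hg]
        tauto
      have hsum : ∑ j, rankOf (M j).Indep {y ∈ g | j ∈ S y} = rankOf (M i).Indep g := by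
        rw [Finset.sum_eq_single i (fun j _ hj => by rw [heq j hj, rankOf_empty]) (by simp),
          heqi]
      rw [hsum] at hcnd
      exact indep_of_rankOf_eq (le_antisymm (rankOf_le_ncard (M i) g) hcnd)
    · obtain ⟨i, hi⟩ := Finset.card_eq_one.mp (hone x hx)
      exact mem_iUnion.mpr ⟨i, hx, by rw [hi]; exact Finset.mem_singleton_self i⟩


lemma NInd_iff (I : Set α) :
    NInd M I ↔ ∃ g : Fin k → Set α, (∀ i, (M i).Indep (g i)) ∧ I = ⋃ i, g i := by
  classical
  constructor
  · intro hI
    obtain ⟨g, hg1, hg2, hg3⟩ := rado _ (fun x => Finset.univ.filter fun i => x ∈ (M i).E) I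
      rfl (fun x _ i hi => (Finset.mem_filter.mp hi).2)
      (fun T hT => by
        have heq : ∀ i : Fin k,
            {x ∈ T | i ∈ Finset.univ.filter fun j => x ∈ (M j).E} = T ∩ (M i).E := by
          intro i
          ext x
          simp [Finset.mem_filter]
        calc T.ncard ≤ fS M T := hI T hT
          _ = _ := by rw [fS]; exact Finset.sum_congr rfl fun i _ => by rw [heq i])
    exact ⟨g, hg1, subset_antisymm hg2 (iUnion_subset hg3)⟩
  · rintro ⟨g, hg, rfl⟩
    intro T hT
    have hcov : T ⊆ ⋃ i, (T ∩ g i) := by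
      intro x hx
      obtain ⟨s, ⟨i, rfl⟩, hxs⟩ := hT hx
      exact mem_iUnion.mpr ⟨i, hx, hxs⟩
    calc T.ncard ≤ (⋃ i, T ∩ g i).ncard := Set.ncard_le_ncard hcov (Set.toFinite _)
      _ ≤ ∑ i, (T ∩ g i).ncard := ncard_iUnion_le _
      _ ≤ fS M T := Finset.sum_le_sum fun i _ =>
          le_rankOf ((hg i).subset inter_subset_right)
            (subset_inter inter_subset_left (inter_subset_right.trans (hg i).subset_ground))

lemma rank_formula (U : Set α) :
    rankOf (NInd M) U
      = sInf {n : ℕ | ∃ T ⊆ U,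
          n = (U \ T).ncard + ∑ i : Fin k, rankOf (M i).Indep (T ∩ (M i).E)} := by
  apply le_antisymm
  · refine le_csInf ⟨(U \ ∅).ncard + ∑ i : Fin k, rankOf (M i).Indep (∅ ∩ (M i).E),
      ∅, empty_subset _, rfl⟩ ?_
    rintro b ⟨T, hTU, rfl⟩
    refine csSup_le ⟨0, ∅, empty_subset _, NInd_empty, by simp⟩ ?_
    rintro n ⟨I, hIU, hI, rfl⟩
    have h1 : (I ∩ T).ncard ≤ fS M (I ∩ T) := hI _ inter_subset_left
    have h2 : fS M (I ∩ T) ≤ fS M T := fS_mono inter_subset_right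
    have h3 : (I \ T).ncard ≤ (U \ T).ncard :=
      Set.ncard_le_ncard (diff_subset_diff_left hIU) (Set.toFinite _)
    have h4 : (I ∩ T).ncard + (I \ T).ncard = I.ncard :=
      Set.ncard_inter_add_ncard_diff_eq_ncard I T (Set.toFinite _)
    have h5 : fS M T = ∑ i : Fin k, rankOf (M i).Indep (T ∩ (M i).E) := rfl
    omega
  · obtain ⟨Ib, hIb⟩ := (UnionMatroid M).exists_isBasis' U
    have hIbInd : NInd M Ib := by
      have h := hIb.indep
      rwa [unionMatroid_indep (M := M)] at h
    have hrank : rankOf (NInd M) U = Ib.ncard := by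
      rw [← unionMatroid_indep (M := M)]
      exact rankOf_basis' hIb
    have hW : ∀ x ∈ U \ Ib, x ∉ Ib ∧ ¬ NInd M (insert x Ib) := by
      intro x hx
      refine ⟨hx.2, fun h => hIb.insert_not_indep hx ?_⟩
      rw [unionMatroid_indep (M := M)]
      exact h
    obtain ⟨A, hAIb, hkey⟩ := exists_tight hIbInd (U \ Ib) hW
    have hTU : A ∪ (U \ Ib) ⊆ U := union_subset (hAIb.trans hIb.subset) diff_subset
    have hUdiff : U \ (A ∪ (U \ Ib)) = Ib \ A := by
      have hIbU := hIb.subset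
      ext y
      simp only [Set.mem_diff, Set.mem_union, not_or, not_and, not_not]
      constructor
      · rintro ⟨hyU, hyA, hyIb⟩
        exact ⟨hyIb hyU, hyA⟩
      · rintro ⟨hyIb, hyA⟩
        exact ⟨hIbU hyIb, hyA, fun _ => hyIb⟩
    have hle : sInf {n : ℕ | ∃ T ⊆ U,
          n = (U \ T).ncard + ∑ i : Fin k, rankOf (M i).Indep (T ∩ (M i).E)}
        ≤ (U \ (A ∪ (U \ Ib))).ncard
          + ∑ i : Fin k, rankOf (M i).Indep ((A ∪ (U \ Ib)) ∩ (M i).E) :=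
      Nat.sInf_le ⟨A ∪ (U \ Ib), hTU, rfl⟩
    have hfS : ∑ i : Fin k, rankOf (M i).Indep ((A ∪ (U \ Ib)) ∩ (M i).E) = A.ncard := hkey
    have hc : (Ib \ A).ncard + A.ncard = Ib.ncard :=
      Set.ncard_diff_add_ncard_of_subset hAIb (Set.toFinite _)
    rw [hrank]
    rw [hUdiff, hfS] at hle
    omega

theorem matroid_union' (M : Fin k → Matroid α) :
    ∃ N : Matroid α, N.E = ⋃ i, (M i).E ∧
      (∀ I : Set α, N.Indep I ↔
        ∃ f : Fin k → Set α, (∀ i, (M i).Indep (f i)) ∧ I = ⋃ i, f i) ∧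
      ∀ U ⊆ ⋃ i, (M i).E,
        rankOf N.Indep U =
          sInf {n : ℕ | ∃ T ⊆ U,
            n = (U \ T).ncard + ∑ i : Fin k, rankOf (M i).Indep (T ∩ (M i).E)} := by
  refine ⟨UnionMatroid M, unionMatroid_E, fun I => ?_, fun U _ => ?_⟩
  · rw [unionMatroid_indep]
    exact NInd_iff I
  · rw [unionMatroid_indep]
    exact rank_formula U


end Union

end MatroidUnionAux

theorem matroid_union {α : Type*} [Fintype α] {k : ℕ} (M : Fin k → Matroid α) :
    ∃ N : Matroid α, N.E = ⋃ i, (M i).E ∧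
      (∀ I : Set α, N.Indep I ↔
        ∃ f : Fin k → Set α, (∀ i, (M i).Indep (f i)) ∧ I = ⋃ i, f i) ∧
      ∀ U ⊆ ⋃ i, (M i).E,
        rankOf N.Indep U =
          sInf {n : ℕ | ∃ T ⊆ U,
            n = (U \ T).ncard + ∑ i : Fin k, rankOf (M i).Indep (T ∩ (M i).E)} := by
  exact MatroidUnionAux.matroid_union' M
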